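/- Fix ρ > 0 and a ∈ (0, 2). There exists a constant C = C(ρ, a) such that for every integer T ≥ 2 and every real B > 0 with BT ≥ 2, setting T₀ = ⌊(T−1)/2⌋, λ_s = 2πs/T, and for θ ∈ [−π, π] the index set M(θ, B) = { s ∈ ℤ : s ≠ 0, |s| ≤ T₀, λ_s ∈ (θ − ρB, θ + ρB) }, the following hold: (1) if |θ| > 2ρB then Σ_{s ∈ M(θ,B)} |λ_s|^{−a} ≤ C·B·T·|θ|^{−a}; (2) if |θ| ≤ 2ρB then Σ_{s ∈ M(θ,B)} |λ_s|^{−a} ≤ C·T·B^{1−a} when 0 < a < 1, Σ_{s ∈ M(θ,B)} |λ_s|^{−1} ≤ C·T·log(BT) when a = 1, and Σ_{s ∈ M(θ,B)} |λ_s|^{−a} ≤ C·T^{a} when 1 < a < 2. -/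

import Mathlib

open scoped Real

lemma aux_card_le (M : Finset ℤ) (x y : ℝ) (hxy : x < y)
    (h : ∀ s ∈ M, x < (s:ℝ) ∧ (s:ℝ) < y) : (M.card : ℝ) ≤ y - x + 1 := by
  have hsub : M ⊆ Finset.Icc (⌊x⌋ + 1) (⌈y⌉ - 1) := by
    intro s hs
    obtain ⟨h1, h2⟩ := h s hs
    rw [Finset.mem_Icc]
    constructor
    · have hx : (⌊x⌋:ℝ) < (s:ℝ) := lt_of_le_of_lt (Int.floor_le x) h1
      have : (⌊x⌋:ℤ) < s := by exact_mod_cast hx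
      omega
    · have hy : (s:ℝ) < (⌈y⌉:ℝ) := h2.trans_le (Int.le_ceil y)
      have : (s:ℤ) < ⌈y⌉ := by exact_mod_cast hy
      omega
  have hcard : M.card ≤ (⌈y⌉ - 1 + 1 - (⌊x⌋ + 1)).toNat := by
    simpa [Int.card_Icc] using Finset.card_le_card hsub
  have hc : ((⌈y⌉ - 1 + 1 - (⌊x⌋ + 1)).toNat : ℝ) ≤ y - x + 1 := by
    have hy1' : (⌈y⌉:ℝ) < y + 1 := Int.ceil_lt_add_one y
    have hx1' : x - 1 < (⌊x⌋:ℝ) := Int.sub_one_lt_floor x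
    rcases le_or_gt (⌈y⌉ - 1 + 1 - (⌊x⌋ + 1)) 0 with h0 | h0
    · rw [Int.toNat_of_nonpos h0]
      norm_num; linarith
    · have hcast : (((⌈y⌉ - 1 + 1 - (⌊x⌋ + 1)).toNat : ℕ) : ℝ)
          = ((⌈y⌉ - 1 + 1 - (⌊x⌋ + 1) : ℤ) : ℝ) := by
        exact_mod_cast congrArg (Int.cast : ℤ → ℝ) (Int.toNat_of_nonneg h0.le)
      rw [hcast]
      push_cast
      linarith
  calc (M.card : ℝ) ≤ ((⌈y⌉ - 1 + 1 - (⌊x⌋ + 1)).toNat : ℝ) := by exact_mod_cast hcard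
    _ ≤ y - x + 1 := hc

lemma aux_step (p : ℝ) (hp0 : 0 < p) (hp1 : p ≤ 1) (n : ℕ) :
    p * ((n:ℝ)+1) ^ (p-1) ≤ ((n:ℝ)+1) ^ p - (n:ℝ) ^ p := by
  have hn1 : (0:ℝ) < (n:ℝ) + 1 := by positivity
  have hs : (-1:ℝ) ≤ -(1/((n:ℝ)+1)) := by
    rw [neg_le_neg_iff]
    apply div_le_one_of_le₀ <;> linarith
  have hb := rpow_one_add_le_one_add_mul_self hs hp0.le hp1
  have h1s : (1:ℝ) + (-(1/((n:ℝ)+1))) = (n:ℝ)/((n:ℝ)+1) := by field_simp; ring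
  rw [h1s] at hb
  have hkey : (n:ℝ)^p ≤ ((n:ℝ)+1)^p * (1 + p * (-(1/((n:ℝ)+1)))) := by
    have hn : (n:ℝ) = ((n:ℝ)+1) * ((n:ℝ)/((n:ℝ)+1)) := by field_simp
    calc (n:ℝ)^p = (((n:ℝ)+1) * ((n:ℝ)/((n:ℝ)+1)))^p := by rw [← hn]
      _ = ((n:ℝ)+1)^p * ((n:ℝ)/((n:ℝ)+1))^p := Real.mul_rpow hn1.le (by positivity)
      _ ≤ ((n:ℝ)+1)^p * (1 + p * (-(1/((n:ℝ)+1)))) :=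
          mul_le_mul_of_nonneg_left hb (Real.rpow_nonneg hn1.le p)
  have hexp : ((n:ℝ)+1)^p * (1 + p * (-(1/((n:ℝ)+1)))) = ((n:ℝ)+1)^p - p * ((n:ℝ)+1)^(p-1) := by
    have h2 : ((n:ℝ)+1)^(p-1) = ((n:ℝ)+1)^p / ((n:ℝ)+1) := by
      rw [Real.rpow_sub hn1, Real.rpow_one]
    rw [h2]; field_simp; ring
  rw [hexp] at hkey; linarith

lemma aux_sum_lt_one (a : ℝ) (ha0 : 0 < a) (ha1 : a < 1) (N : ℕ) :
    ∑ k ∈ Finset.Icc 1 N, (k:ℝ) ^ (-a) ≤ (N:ℝ) ^ (1-a) / (1-a) := by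
  have h1a : (0:ℝ) < 1 - a := by linarith
  induction N with
  | zero => simp [Real.zero_rpow h1a.ne']
  | succ n ih =>
    rw [Finset.sum_Icc_succ_top (Nat.le_add_left 1 n)]
    have hstep := aux_step (1-a) h1a (by linarith) n
    rw [show (1-a) - 1 = -a by ring] at hstep
    have hcast : ((n+1 : ℕ):ℝ) = (n:ℝ)+1 := by push_cast; ring
    rw [hcast]
    have t1 : ((n:ℝ)+1)^(-a) ≤ (((n:ℝ)+1)^(1-a) - (n:ℝ)^(1-a)) / (1-a) := by
      rw [le_div_iff₀ h1a]; linarith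
    have t2 : (n:ℝ)^(1-a)/(1-a) + (((n:ℝ)+1)^(1-a) - (n:ℝ)^(1-a))/(1-a)
        = ((n:ℝ)+1)^(1-a)/(1-a) := by ring
    linarith

lemma aux_sum_eq_one (N : ℕ) :
    ∑ k ∈ Finset.Icc 1 N, (k:ℝ) ^ (-(1:ℝ)) ≤ 1 + Real.log N := by
  have h := harmonic_le_one_add_log N
  have heq : ∑ k ∈ Finset.Icc 1 N, (k:ℝ)^(-(1:ℝ)) = ((harmonic N : ℚ) : ℝ) := by
    rw [harmonic_eq_sum_Icc]
    push_cast
    refine Finset.sum_congr rfl fun k hk => ?_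
    rw [Real.rpow_neg_one]
  rw [heq]; exact h

lemma aux_sum_gt_one (a : ℝ) (ha : 1 < a) (N : ℕ) :
    ∑ k ∈ Finset.Icc 1 N, (k:ℝ) ^ (-a) ≤ ∑' k : ℕ, (k:ℝ) ^ (-a) := by
  apply Summable.sum_le_tsum
  · intro k _
    positivity
  · exact Real.summable_nat_rpow.mpr (by linarith)

lemma aux_sym (f : ℤ → ℝ) (hf : ∀ s, f (-s) = f s) (hf0 : f 0 = 0) (N : ℕ) :
    ∑ s ∈ Finset.Icc (-(N:ℤ)) (N:ℤ), f s = 2 * ∑ s ∈ Finset.Ioc (0:ℤ) (N:ℤ), f s := by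
  have hsplit : Finset.Icc (-(N:ℤ)) (N:ℤ) = Finset.Ico (-(N:ℤ)) 0 ∪ Finset.Icc 0 (N:ℤ) := by
    ext s
    simp only [Finset.mem_Icc, Finset.mem_Ico, Finset.mem_union]
    omega
  have hdisj : Disjoint (Finset.Ico (-(N:ℤ)) 0) (Finset.Icc 0 (N:ℤ)) := by
    rw [Finset.disjoint_left]
    intro s hs hs'
    simp only [Finset.mem_Ico, Finset.mem_Icc] at hs hs'
    omega
  rw [hsplit, Finset.sum_union hdisj]
  have h1 : ∑ s ∈ Finset.Ico (-(N:ℤ)) 0, f s = ∑ s ∈ Finset.Ioc (0:ℤ) (N:ℤ), f s := by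
    refine Finset.sum_nbij' (i := fun s => -s) (j := fun s => -s) ?_ ?_ ?_ ?_ ?_
    · intro s hs; simp only [Finset.mem_Ico] at hs; simp only [Finset.mem_Ioc]; omega
    · intro s hs; simp only [Finset.mem_Ioc] at hs; simp only [Finset.mem_Ico]; omega
    · intro s _; ring
    · intro s _; ring
    · intro s _; rw [hf]
  have h2 : ∑ s ∈ Finset.Icc (0:ℤ) (N:ℤ), f s = ∑ s ∈ Finset.Ioc (0:ℤ) (N:ℤ), f s := by
    rw [← Finset.Icc_erase_left, Finset.sum_erase _ hf0]
  rw [h1, h2]; ring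

lemma aux_bridge (f : ℝ → ℝ) (N : ℕ) :
    ∑ s ∈ Finset.Ioc (0:ℤ) (N:ℤ), f (s:ℝ) = ∑ k ∈ Finset.Icc 1 N, f (k:ℝ) := by
  refine Finset.sum_nbij' (i := fun s => s.toNat) (j := fun k => (k:ℤ)) ?_ ?_ ?_ ?_ ?_
  · intro s hs; simp only [Finset.mem_Ioc] at hs; simp only [Finset.mem_Icc]; omega
  · intro k hk; simp only [Finset.mem_Icc] at hk; simp only [Finset.mem_Ioc]; omega
  · intro s hs; simp only [Finset.mem_Ioc] at hs; exact Int.toNat_of_nonneg hs.1.le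
  · intro k hk; simp
  · intro s hs
    simp only [Finset.mem_Ioc] at hs
    congr 1
    exact_mod_cast (congrArg (Int.cast : ℤ → ℝ) (Int.toNat_of_nonneg hs.1.le)).symm

/-- Summation of negative powers of Fourier frequencies over the bandwidth window
`M(θ, B) = {s ≠ 0 : |s| ≤ T₀, λ_s ∈ (θ − ρB, θ + ρB)}` around a target frequency `θ`. -/
theorem stmt_14
    (ρ a : ℝ) (hρ : 0 < ρ) (ha : a ∈ Set.Ioo (0 : ℝ) 2) :
    ∃ C : ℝ, ∀ T : ℕ, 2 ≤ T → ∀ B : ℝ, 0 < B → 2 ≤ B * T → ∀ θ ∈ Set.Icc (-π) π,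
      let T₀ : ℤ := (((T - 1) / 2 : ℕ) : ℤ)
      let M : Finset ℤ := (Finset.Icc (-T₀) T₀).filter
        (fun s : ℤ => s ≠ 0 ∧ θ - ρ * B < 2 * π * (s : ℝ) / (T : ℝ) ∧
          2 * π * (s : ℝ) / (T : ℝ) < θ + ρ * B)
      (2 * ρ * B < |θ| →
        ∑ s ∈ M, |2 * π * (s : ℝ) / (T : ℝ)| ^ (-a) ≤ C * B * T * |θ| ^ (-a)) ∧
      (|θ| ≤ 2 * ρ * B →
        ((a < 1 → ∑ s ∈ M, |2 * π * (s : ℝ) / (T : ℝ)| ^ (-a) ≤ C * T * B ^ (1 - a)) ∧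
         (a = 1 → ∑ s ∈ M, |2 * π * (s : ℝ) / (T : ℝ)| ^ (-a) ≤ C * T * Real.log (B * T)) ∧
         (1 < a → ∑ s ∈ M, |2 * π * (s : ℝ) / (T : ℝ)| ^ (-a) ≤ C * (T : ℝ) ^ a))) := by
  obtain ⟨ha0, ha2⟩ := ha
  have hπ : (0:ℝ) < π := Real.pi_pos
  obtain ⟨c₀, hc₀def⟩ : ∃ c : ℝ, c = 3*ρ/(2*π) + 1/2 := ⟨_, rfl⟩
  have hc₀ : 0 < c₀ := by rw [hc₀def]; positivity
  obtain ⟨Z, hZdef⟩ : ∃ z : ℝ, z = ∑' k : ℕ, (k:ℝ) ^ (-a) := ⟨_, rfl⟩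
  have hZ : 0 ≤ Z := hZdef ▸ tsum_nonneg (fun k => Real.rpow_nonneg (Nat.cast_nonneg k) _)
  obtain ⟨c1, hc1def⟩ : ∃ c : ℝ, c = (2:ℝ)^a * (ρ/π + 1/2) := ⟨_, rfl⟩
  obtain ⟨c2, hc2def⟩ : ∃ c : ℝ, c = 2 * c₀^(1-a) / (1-a) := ⟨_, rfl⟩
  obtain ⟨K, hKdef⟩ : ∃ k : ℝ, k = |1 + Real.log c₀| := ⟨_, rfl⟩
  obtain ⟨c3, hc3def⟩ : ∃ c : ℝ, c = 2 * (K / Real.log 2 + 1) := ⟨_, rfl⟩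
  obtain ⟨c4, hc4def⟩ : ∃ c : ℝ, c = 2 * Z := ⟨_, rfl⟩
  refine ⟨c1 + |c2| + |c3| + |c4|, ?_⟩
  obtain ⟨C, hCdef⟩ : ∃ c : ℝ, c = c1 + |c2| + |c3| + |c4| := ⟨_, rfl⟩
  rw [← hCdef]
  have hc1nn : 0 ≤ c1 := by
    rw [hc1def]
    have h0 : (0:ℝ) < (2:ℝ)^a := Real.rpow_pos_of_pos two_pos a
    have h1 : (0:ℝ) ≤ ρ/π + 1/2 := by positivity
    positivity
  have hc1C : c1 ≤ C := by
    have := abs_nonneg c2; have := abs_nonneg c3; have := abs_nonneg c4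
    rw [hCdef]; linarith
  have hc2C : c2 ≤ C := by
    have := le_abs_self c2; have := abs_nonneg c3; have := abs_nonneg c4
    rw [hCdef]; linarith
  have hc3C : c3 ≤ C := by
    have := le_abs_self c3; have := abs_nonneg c2; have := abs_nonneg c4
    rw [hCdef]; linarith
  have hc4C : c4 ≤ C := by
    have := le_abs_self c4; have := abs_nonneg c2; have := abs_nonneg c3
    rw [hCdef]; linarith
  intro T hT B hB hBT θ hθ
  intro T₀ M
  have hMdef : M = (Finset.Icc (-T₀) T₀).filter
      (fun s : ℤ => s ≠ 0 ∧ θ - ρ * B < 2 * π * (s : ℝ) / (T : ℝ) ∧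
        2 * π * (s : ℝ) / (T : ℝ) < θ + ρ * B) := rfl
  have hT0 : (0:ℝ) < T := by
    have : (0:ℕ) < T := by omega
    exact_mod_cast this
  have hTne : (T:ℝ) ≠ 0 := hT0.ne'
  have hmem : ∀ s ∈ M, s ≠ 0 ∧ θ - ρ*B < 2*π*(s:ℝ)/T ∧ 2*π*(s:ℝ)/T < θ + ρ*B := by
    intro s hs
    rw [hMdef, Finset.mem_filter] at hs
    exact hs.2
  have hterm_nonneg : ∀ s : ℤ, 0 ≤ |2*π*(s:ℝ)/T| ^ (-a) :=
    fun s => Real.rpow_nonneg (abs_nonneg _) _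
  constructor
  · -- case |θ| > 2ρB
    intro h1
    have hρB : 0 < ρ * B := by positivity
    have hθpos : 0 < |θ| := lt_trans (by positivity) h1
    have hbound : ∀ s ∈ M, |2*π*(s:ℝ)/T| ^ (-a) ≤ (2:ℝ)^a * |θ| ^ (-a) := by
      intro s hs
      obtain ⟨-, hl, hr⟩ := hmem s hs
      set lam := 2*π*(s:ℝ)/T with hlam
      have h3 : |lam - θ| < ρ * B := abs_lt.mpr ⟨by linarith, by linarith⟩
      have h4 : |θ|/2 ≤ |lam| := by
        have h5 := abs_sub_abs_le_abs_sub θ lam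
        rw [abs_sub_comm] at h5
        linarith
      have h5 : |lam| ^ (-a) ≤ (|θ|/2) ^ (-a) :=
        Real.rpow_le_rpow_of_nonpos (by positivity) h4 (by linarith)
      have h6 : (|θ|/2) ^ (-a) = (2:ℝ)^a * |θ|^(-a) := by
        rw [Real.div_rpow (abs_nonneg θ) (by norm_num : (0:ℝ) ≤ 2),
          Real.rpow_neg (by norm_num : (0:ℝ) ≤ 2), div_eq_mul_inv, inv_inv, mul_comm]
      rw [h6] at h5
      exact h5
    have hcard : (M.card : ℝ) ≤ (ρ/π + 1/2) * (B * T) := by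
      have hkey := aux_card_le M ((θ - ρ*B) * (T/(2*π))) ((θ + ρ*B) * (T/(2*π)))
        (by have : θ - ρ*B < θ + ρ*B := by linarith
            exact mul_lt_mul_of_pos_right this (by positivity))
        (by intro s hs
            obtain ⟨-, hl, hr⟩ := hmem s hs
            have hid : 2*π*(s:ℝ)/T*(T/(2*π)) = (s:ℝ) := by field_simp
            constructor
            · calc (θ - ρ*B) * (T/(2*π)) < (2*π*(s:ℝ)/T) * (T/(2*π)) :=
                    mul_lt_mul_of_pos_right hl (by positivity)
                _ = (s:ℝ) := hid
            · calc (s:ℝ) = (2*π*(s:ℝ)/T) * (T/(2*π)) := hid.symm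
                _ < (θ + ρ*B) * (T/(2*π)) := mul_lt_mul_of_pos_right hr (by positivity))
      have heq : (θ + ρ*B) * (T/(2*π)) - (θ - ρ*B) * (T/(2*π)) = ρ*B*(T:ℝ)/π := by
        field_simp; ring
      have h7 : (1:ℝ) ≤ B*T/2 := by linarith
      have h8 : ρ*B*(T:ℝ)/π = (ρ/π)*(B*T) := by ring
      have h9 : (ρ/π + 1/2) * (B*T) = (ρ/π)*(B*T) + (B*T)/2 := by ring
      rw [heq] at hkey
      linarith [hkey, h7, h8, h9]
    calc ∑ s ∈ M, |2*π*(s:ℝ)/T| ^ (-a)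
        ≤ M.card • ((2:ℝ)^a * |θ|^(-a)) := Finset.sum_le_card_nsmul M _ _ hbound
      _ = (M.card:ℝ) * ((2:ℝ)^a * |θ|^(-a)) := nsmul_eq_mul _ _
      _ ≤ ((ρ/π + 1/2)*(B*T)) * ((2:ℝ)^a * |θ|^(-a)) := by
          apply mul_le_mul_of_nonneg_right hcard
          positivity
      _ = c1 * (B * T * |θ|^(-a)) := by rw [hc1def]; ring
      _ ≤ C * (B * T * |θ|^(-a)) := by
          apply mul_le_mul_of_nonneg_right hc1C
          positivity
      _ = C * B * T * |θ|^(-a) := by ring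
  · -- case |θ| ≤ 2ρB
    intro h2
    obtain ⟨N, hNdef⟩ : ∃ n : ℕ, n = ⌈3*ρ*B*T/(2*π)⌉₊ := ⟨_, rfl⟩
    have hNpos : 0 < N := hNdef ▸ Nat.ceil_pos.mpr (by positivity)
    have hNle : (N:ℝ) ≤ c₀ * (B*T) := by
      have h8 : (N:ℝ) < 3*ρ*B*T/(2*π) + 1 := by
        rw [hNdef]; exact Nat.ceil_lt_add_one (by positivity)
      have h9 : 3*ρ*B*(T:ℝ)/(2*π) = (3*ρ/(2*π))*(B*T) := by ring
      have h10 : (1:ℝ) ≤ B*T/2 := by linarith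
      have h11 : c₀ * (B*T) = (3*ρ/(2*π))*(B*T) + (B*T)/2 := by rw [hc₀def]; ring
      rw [h9] at h8
      linarith [h8, h10, h11]
    have hMsub : M ⊆ Finset.Icc (-(N:ℤ)) (N:ℤ) := by
      intro s hs
      obtain ⟨hs0, hl, hr⟩ := hmem s hs
      have hlam : |2*π*(s:ℝ)/T| < 3*ρ*B := by
        rw [abs_lt]
        constructor
        · have := neg_abs_le θ; linarith
        · have := le_abs_self θ; linarith
      have habs2 : |2*π*(s:ℝ)/T| = 2*π*|(s:ℝ)|/T := by
        rw [abs_div, abs_mul, abs_mul, abs_of_pos hπ, abs_of_pos hT0]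
        norm_num
      rw [habs2] at hlam
      have habs : |(s:ℝ)| < 3*ρ*B*T/(2*π) := by
        rw [lt_div_iff₀ (by positivity : (0:ℝ) < 2*π)]
        rw [div_lt_iff₀ hT0] at hlam
        linarith [hlam]
      have h12 : |(s:ℝ)| ≤ (N:ℝ) := by
        rw [hNdef]; exact habs.le.trans (Nat.le_ceil _)
      have h13 : |s| ≤ (N:ℤ) := by
        rw [← Int.cast_abs] at h12
        exact_mod_cast h12
      simp only [Finset.mem_Icc]
      exact abs_le.mp h13
    have hsum1 : ∑ s ∈ M, |2*π*(s:ℝ)/T|^(-a)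
        ≤ ∑ s ∈ Finset.Icc (-(N:ℤ)) (N:ℤ), |2*π*(s:ℝ)/T|^(-a) :=
      Finset.sum_le_sum_of_subset_of_nonneg hMsub (fun s _ _ => hterm_nonneg s)
    have hsym : ∑ s ∈ Finset.Icc (-(N:ℤ)) (N:ℤ), |2*π*(s:ℝ)/T|^(-a)
        = 2 * ∑ s ∈ Finset.Ioc (0:ℤ) (N:ℤ), |2*π*(s:ℝ)/T|^(-a) := by
      apply aux_sym (fun s : ℤ => |2*π*(s:ℝ)/T|^(-a))
      · intro s
        simp only [Int.cast_neg]
        rw [show 2*π*(-(s:ℝ))/T = -(2*π*(s:ℝ)/T) by ring, abs_neg]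
      · simp only [Int.cast_zero, mul_zero, zero_div, abs_zero]
        exact Real.zero_rpow (by linarith : -a ≠ 0)
    have hfac : ∀ s ∈ Finset.Ioc (0:ℤ) (N:ℤ), |2*π*(s:ℝ)/T|^(-a) ≤ (T:ℝ)^a * (s:ℝ)^(-a) := by
      intro s hs
      simp only [Finset.mem_Ioc] at hs
      have hspos : (0:ℝ) < (s:ℝ) := by exact_mod_cast hs.1
      have habs : |2*π*(s:ℝ)/T| = (2*π/T) * (s:ℝ) := by
        rw [abs_of_pos (by positivity)]; ring
      rw [habs, Real.mul_rpow (by positivity) hspos.le]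
      apply mul_le_mul_of_nonneg_right _ (Real.rpow_nonneg hspos.le _)
      have h11 : (1:ℝ)/T ≤ 2*π/T := by
        gcongr
        linarith [Real.pi_gt_three]
      calc (2*π/(T:ℝ))^(-a) ≤ ((1:ℝ)/T)^(-a) :=
            Real.rpow_le_rpow_of_nonpos (by positivity) h11 (by linarith)
        _ = (T:ℝ)^a := by rw [one_div, Real.inv_rpow hT0.le, ← Real.rpow_neg hT0.le, neg_neg]
    have hTa : (0:ℝ) ≤ (T:ℝ)^a := Real.rpow_nonneg hT0.le a
    have hsum2 : ∑ s ∈ Finset.Ioc (0:ℤ) (N:ℤ), |2*π*(s:ℝ)/T|^(-a)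
        ≤ (T:ℝ)^a * ∑ k ∈ Finset.Icc 1 N, (k:ℝ)^(-a) := by
      calc ∑ s ∈ Finset.Ioc (0:ℤ) (N:ℤ), |2*π*(s:ℝ)/T|^(-a)
          ≤ ∑ s ∈ Finset.Ioc (0:ℤ) (N:ℤ), (T:ℝ)^a * (s:ℝ)^(-a) := Finset.sum_le_sum hfac
        _ = (T:ℝ)^a * ∑ s ∈ Finset.Ioc (0:ℤ) (N:ℤ), (s:ℝ)^(-a) := by rw [Finset.mul_sum]
        _ = (T:ℝ)^a * ∑ k ∈ Finset.Icc 1 N, (k:ℝ)^(-a) := by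
            rw [aux_bridge (fun x : ℝ => x^(-a)) N]
    have hmain : ∑ s ∈ M, |2*π*(s:ℝ)/T|^(-a)
        ≤ 2 * ((T:ℝ)^a * ∑ k ∈ Finset.Icc 1 N, (k:ℝ)^(-a)) := by
      rw [hsym] at hsum1
      have := mul_le_mul_of_nonneg_left hsum2 (by norm_num : (0:ℝ) ≤ 2)
      linarith
    have hBT0 : (0:ℝ) < B * T := by positivity
    refine ⟨?_, ?_, ?_⟩
    · -- 0 < a < 1
      intro ha1
      have h1a : (0:ℝ) < 1-a := by linarith
      have hS := aux_sum_lt_one a ha0 ha1 N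
      have hNpow : (N:ℝ)^(1-a) ≤ (c₀*(B*T))^(1-a) :=
        Real.rpow_le_rpow (Nat.cast_nonneg N) hNle h1a.le
      have hBTpow : (c₀*(B*T))^(1-a) = c₀^(1-a) * (B^(1-a) * (T:ℝ)^(1-a)) := by
        rw [Real.mul_rpow hc₀.le hBT0.le, Real.mul_rpow hB.le hT0.le]
      have hTT : (T:ℝ)^a * (T:ℝ)^(1-a) = (T:ℝ) := by
        rw [← Real.rpow_add hT0]
        norm_num
      have hS2 : ∑ k ∈ Finset.Icc 1 N, (k:ℝ)^(-a) ≤ (c₀*(B*T))^(1-a)/(1-a) :=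
        hS.trans (by gcongr)
      calc ∑ s ∈ M, |2*π*(s:ℝ)/T|^(-a)
          ≤ 2 * ((T:ℝ)^a * ∑ k ∈ Finset.Icc 1 N, (k:ℝ)^(-a)) := hmain
        _ ≤ 2 * ((T:ℝ)^a * ((c₀*(B*T))^(1-a)/(1-a))) := by
            apply mul_le_mul_of_nonneg_left (mul_le_mul_of_nonneg_left hS2 hTa)
            norm_num
        _ = 2/(1-a) * c₀^(1-a) * B^(1-a) * ((T:ℝ)^a * (T:ℝ)^(1-a)) := by
            rw [hBTpow]; ring
        _ = c2 * ((T:ℝ) * B^(1-a)) := by rw [hTT, hc2def]; ring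
        _ ≤ C * ((T:ℝ) * B^(1-a)) := by
            apply mul_le_mul_of_nonneg_right hc2C
            positivity
        _ = C * T * B^(1-a) := by ring
    · -- a = 1
      intro ha1
      subst ha1
      have hS := aux_sum_eq_one N
      have hN0 : (0:ℝ) < N := by exact_mod_cast hNpos
      have hlogN : Real.log N ≤ Real.log c₀ + Real.log (B*T) := by
        rw [← Real.log_mul hc₀.ne' hBT0.ne']
        exact Real.log_le_log hN0 hNle
      have hlog2 : (0:ℝ) < Real.log 2 := Real.log_pos one_lt_two
      have hlogBT : Real.log 2 ≤ Real.log (B*T) := Real.log_le_log two_pos hBT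
      have hKK : 1 + Real.log c₀ ≤ K := hKdef ▸ le_abs_self _
      have hK0 : (0:ℝ) ≤ K := hKdef ▸ abs_nonneg _
      have hKb : K ≤ K/Real.log 2 * Real.log (B*T) := by
        have he : K = K/Real.log 2 * Real.log 2 := by field_simp
        calc K = K/Real.log 2 * Real.log 2 := he
          _ ≤ K/Real.log 2 * Real.log (B*T) :=
              mul_le_mul_of_nonneg_left hlogBT (by positivity)
      have hS2 : ∑ k ∈ Finset.Icc 1 N, (k:ℝ)^(-(1:ℝ))
          ≤ (K/Real.log 2 + 1) * Real.log (B*T) := by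
        have : 1 + Real.log N ≤ K + Real.log (B*T) := by linarith
        have h15 : (K/Real.log 2 + 1) * Real.log (B*T)
            = K/Real.log 2 * Real.log (B*T) + Real.log (B*T) := by ring
        linarith
      have hT1 : ((T:ℝ))^((1:ℝ)) = (T:ℝ) := Real.rpow_one _
      calc ∑ s ∈ M, |2*π*(s:ℝ)/T|^(-(1:ℝ))
          ≤ 2 * ((T:ℝ)^((1:ℝ)) * ∑ k ∈ Finset.Icc 1 N, (k:ℝ)^(-(1:ℝ))) := hmain
        _ ≤ 2 * ((T:ℝ)^((1:ℝ)) * ((K/Real.log 2 + 1) * Real.log (B*T))) := by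
            apply mul_le_mul_of_nonneg_left (mul_le_mul_of_nonneg_left hS2 hTa)
            norm_num
        _ = c3 * ((T:ℝ) * Real.log (B*T)) := by rw [hT1, hc3def]; ring
        _ ≤ C * ((T:ℝ) * Real.log (B*T)) := by
            apply mul_le_mul_of_nonneg_right hc3C
            have : (0:ℝ) ≤ Real.log (B*T) := by linarith
            positivity
        _ = C * T * Real.log (B*T) := by ring
    · -- 1 < a
      intro ha1
      have hS := aux_sum_gt_one a ha1 N
      calc ∑ s ∈ M, |2*π*(s:ℝ)/T|^(-a)
          ≤ 2 * ((T:ℝ)^a * ∑ k ∈ Finset.Icc 1 N, (k:ℝ)^(-a)) := hmain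
        _ ≤ 2 * ((T:ℝ)^a * Z) := by
            apply mul_le_mul_of_nonneg_left (mul_le_mul_of_nonneg_left ?_ hTa)
            · norm_num
            · rw [hZdef]; exact hS
        _ = c4 * (T:ℝ)^a := by rw [hc4def]; ring
        _ ≤ C * (T:ℝ)^a := mul_le_mul_of_nonneg_right hc4C hTa
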